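/- arXiv:2505.21222 — 4 statements merged into one kernel-verified Lean document; each statement's English description precedes it below -/
import Mathlib

section
/- Let G be a finite group whose order is p^α q^β for two primes p, q and nonnegative integers α, β. Then for any Sylow p-subgroups P, P' of G and any Sylow q-subgroups Q, Q' of G, there exists an element x ∈ G such that P^x = P' and Q^x = Q'. (That is, G acts transitively by simultaneous conjugation on pairs consisting of a Sylow p-subgroup and a Sylow q-subgroup.) -/
/-- The conjugate subgroup `H^x = x⁻¹ H x`. -/
def conjSub {G : Type*} [Group G] (H : Subgroup G) (x : G) : Subgroup G :=
  H.map (MulAut.conj x⁻¹).toMonoidHom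

lemma conjSub_sylow {G : Type*} [Group G] {p : ℕ} (P : Sylow p G) (g : G) :
    conjSub (P : Subgroup G) g⁻¹ = ((g • P : Sylow p G) : Subgroup G) := by
  show Subgroup.map (MulAut.conj g⁻¹⁻¹).toMonoidHom (P : Subgroup G) = _
  rw [inv_inv]
  rfl

/-- **Theorem (two primes).** If `|G| = p^α q^β` for primes `p, q`, then `G` acts transitively
by simultaneous conjugation on pairs of a Sylow `p`-subgroup and a Sylow `q`-subgroup. -/
theorem sylow_pair_transitive_of_two_primes
    (G : Type*) [Group G] [Finite G] (p q : ℕ) (hp : p.Prime) (hq : q.Prime)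
    (α β : ℕ) (hcard : Nat.card G = p ^ α * q ^ β)
    (P P' : Sylow p G) (Q Q' : Sylow q G) :
    ∃ x : G, conjSub (P : Subgroup G) x = (P' : Subgroup G) ∧
      conjSub (Q : Subgroup G) x = (Q' : Subgroup G) := by
  haveI : Fact p.Prime := ⟨hp⟩
  haveI : Fact q.Prime := ⟨hq⟩
  by_cases hpq : p = q
  · -- G is a p-group, all Sylow subgroups are ⊤
    subst hpq
    have htop : ∀ (R : Sylow p G), (R : Subgroup G) = ⊤ := by
      intro R
      have h1 : Nat.card R = p ^ (Nat.card G).factorization p :=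
        Sylow.card_eq_multiplicity R
      have h2 : (Nat.card G).factorization p = α + β := by
        rw [hcard, ← pow_add, Nat.Prime.factorization_pow hp, Finsupp.single_eq_same]
      have : Nat.card R = Nat.card G := by rw [h1, h2, hcard, pow_add]
      exact (Subgroup.card_eq_iff_eq_top _).mp this
    refine ⟨1, ?_, ?_⟩
    · rw [htop P, htop P']
      exact Subgroup.map_top_of_surjective _ (MulEquiv.surjective _)
    · rw [htop Q, htop Q']
      exact Subgroup.map_top_of_surjective _ (MulEquiv.surjective _)
  · have cardP' : Nat.card P' = p ^ α := by
      rw [Sylow.card_eq_multiplicity, hcard]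
      congr 1
      rw [Nat.factorization_mul (pow_ne_zero _ hp.pos.ne') (pow_ne_zero _ hq.pos.ne'),
        Nat.Prime.factorization_pow hp, Nat.Prime.factorization_pow hq]
      simp [Finsupp.single_apply, hpq, Ne.symm hpq]
    have cardQ' : Nat.card Q' = q ^ β := by
      rw [Sylow.card_eq_multiplicity, hcard]
      congr 1
      rw [Nat.factorization_mul (pow_ne_zero _ hp.pos.ne') (pow_ne_zero _ hq.pos.ne'),
        Nat.Prime.factorization_pow hp, Nat.Prime.factorization_pow hq]
      simp [Finsupp.single_apply, hpq, Ne.symm hpq]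
    have hcompl : Subgroup.IsComplement' (Q' : Subgroup G) (P' : Subgroup G) := by
      apply Subgroup.isComplement'_of_coprime
      · rw [cardP', cardQ', hcard, mul_comm]
      · rw [cardP', cardQ']
        exact Nat.Coprime.pow _ _ ((Nat.coprime_primes hq hp).mpr (Ne.symm hpq))
    -- conjugacy of Sylow subgroups
    obtain ⟨a, ha⟩ := MulAction.exists_smul_eq G P P'
    obtain ⟨y, hy⟩ := MulAction.exists_smul_eq G (a • Q) Q'
    obtain ⟨⟨t, s⟩, hts⟩ := hcompl.existsUnique y |>.exists
    -- y = t * s with t ∈ Q', s ∈ P'; take g = s * a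
    refine ⟨(s * a)⁻¹, ?_, ?_⟩
    · rw [conjSub_sylow]
      congr 1
      rw [mul_smul, ha]
      exact Sylow.smul_eq_iff_mem_normalizer.mpr (Subgroup.le_normalizer s.2)
    · rw [conjSub_sylow]
      congr 1
      have : (t : G) • ((s : G) • (a • Q)) = Q' := by
        rw [← mul_smul, ← mul_smul]
        simpa [hts, mul_smul] using hy
      have ht : (t : G) • Q' = Q' :=
        Sylow.smul_eq_iff_mem_normalizer.mpr (Subgroup.le_normalizer t.2)
      rw [mul_smul]
      calc (s : G) • (a • Q) = (t : G)⁻¹ • Q' := eq_inv_smul_iff.mpr this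
        _ = Q' := inv_smul_eq_iff.mpr ht.symm
end

section
/- Let G be a finite group, let p_1, …, p_n be distinct primes, and for each i let P_i be a Sylow p_i-subgroup of G that is not normal in G. Then the union of the normalizers N_G(P_1) ∪ ⋯ ∪ N_G(P_n) is a proper subset of G. -/
open scoped Pointwise


/-- **Theorem.** A finite group is not the union of Sylow normalizers of non-normal
Sylow subgroups for distinct primes. -/
theorem union_sylow_normalizers_ne_univ
    (G : Type*) [Group G] [Finite G] (n : ℕ) (p : Fin n → ℕ)
    (hp : ∀ i, (p i).Prime) (hinj : Function.Injective p)
    (P : ∀ i, Sylow (p i) G) (hnn : ∀ i, ¬ (P i : Subgroup G).Normal) :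
    (⋃ i, (Subgroup.normalizer ((P i : Subgroup G) : Set G) : Set G)) ≠ Set.univ := by
  classical
  intro hcov
  set N : Fin n → Subgroup G := fun i => Subgroup.normalizer ((P i : Subgroup G) : Set G) with hNdef
  -- the full family covers
  have hcovuniv : (⋃ i ∈ (Finset.univ : Finset (Fin n)), (N i : Set G)) = Set.univ := by
    simpa [hNdef] using hcov
  -- choose a covering subfamily of minimal cardinality
  obtain ⟨T, hTmem, hTmin⟩ := Finset.exists_min_image
    ((Finset.univ : Finset (Finset (Fin n))).filter
      (fun s => (⋃ i ∈ s, (N i : Set G)) = Set.univ)) Finset.card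
    ⟨Finset.univ, Finset.mem_filter.mpr ⟨Finset.mem_univ _, hcovuniv⟩⟩
  have hTcov : (⋃ i ∈ T, (N i : Set G)) = Set.univ := (Finset.mem_filter.mp hTmem).2
  -- T is nonempty
  have hTne : T.Nonempty := by
    rcases Finset.eq_empty_or_nonempty T with h | h
    · exfalso
      rw [h] at hTcov
      simp only [Finset.notMem_empty, Set.iUnion_of_empty, Set.iUnion_empty] at hTcov
      exact absurd hTcov (Ne.symm (Set.empty_ne_univ).symm)
    · exact h
  -- index of the largest prime in T
  obtain ⟨m, hmT, hmax⟩ := Finset.exists_max_image T p hTne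
  haveI : Fact (p m).Prime := ⟨hp m⟩
  -- the cardinality of T is less than the largest prime
  have hTcard : T.card < p m := by
    have h1 : T.card = (T.image p).card := (Finset.card_image_of_injective T hinj).symm
    have h2 : T.image p ⊆ Finset.Icc 2 (p m) := by
      intro x hx
      obtain ⟨i, hiT, rfl⟩ := Finset.mem_image.mp hx
      exact Finset.mem_Icc.mpr ⟨(hp i).two_le, hmax i hiT⟩
    have h3 : (T.image p).card ≤ (Finset.Icc 2 (p m)).card := Finset.card_le_card h2
    rw [Nat.card_Icc] at h3
    have h4 : p m + 1 - 2 < p m := by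
      have := (hp m).two_le
      omega
    omega
  -- T \ {m} does not cover, giving an exclusive element y of N m
  have herase : (⋃ i ∈ T.erase m, (N i : Set G)) ≠ Set.univ := by
    intro h
    have hmemf : T.erase m ∈ (Finset.univ : Finset (Finset (Fin n))).filter
        (fun s => (⋃ i ∈ s, (N i : Set G)) = Set.univ) :=
      Finset.mem_filter.mpr ⟨Finset.mem_univ _, h⟩
    have := hTmin _ hmemf
    have hlt : (T.erase m).card < T.card := Finset.card_erase_lt_of_mem hmT
    omega
  obtain ⟨y, hy⟩ := (Set.ne_univ_iff_exists_notMem _).mp herase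
  have hynot : ∀ i ∈ T, i ≠ m → y ∉ N i := by
    intro i hiT him hyi
    exact hy (Set.mem_biUnion (Finset.mem_erase.mpr ⟨him, hiT⟩) hyi)
  have hyNm : y ∈ N m := by
    have : y ∈ ⋃ i ∈ T, (N i : Set G) := hTcov ▸ Set.mem_univ y
    obtain ⟨i, hiT, hyi⟩ := Set.mem_iUnion₂.mp this
    rcases eq_or_ne i m with rfl | hne
    · exact hyi
    · exact absurd hyi (hynot i hiT hne)
  -- Key claim: every Sylow (p m)-subgroup equals P m.
  have key : ∀ Q : Sylow (p m) G, (Q : Subgroup G) = (P m : Subgroup G) := by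
    intro Q
    set QS : Subgroup G := (Q : Subgroup G) with hQSdef
    -- indices k for which the coset condition has a witness in Q
    set pred : Fin n → Prop := fun k => ∃ u : QS, y * (u : G) ∈ N k with hpreddef
    set s : Finset (Fin n) := T.filter pred with hsdef
    set v : Fin n → QS := fun k => if h : pred k then h.choose else 1 with hvdef
    have hv : ∀ k ∈ s, y * ((v k : QS) : G) ∈ N k := by
      intro k hk
      have hpk : pred k := (Finset.mem_filter.mp hk).2
      simp only [hvdef, dif_pos hpk]
      exact hpk.choose_spec
    set H : Fin n → Subgroup QS := fun k => (N k).subgroupOf QS with hHdef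
    -- the cosets v k • H k for k ∈ s cover the group QS
    have hQcov : (⋃ k ∈ s, (v k) • ((H k : Subgroup QS) : Set QS)) = Set.univ := by
      apply Set.eq_univ_of_forall
      intro x
      have hx : y * (x : G) ∈ ⋃ i ∈ T, (N i : Set G) := hTcov ▸ Set.mem_univ _
      obtain ⟨k, hkT, hyk⟩ := Set.mem_iUnion₂.mp hx
      have hks : k ∈ s := Finset.mem_filter.mpr ⟨hkT, ⟨x, hyk⟩⟩
      refine Set.mem_iUnion₂.mpr ⟨k, hks, ?_⟩
      rw [mem_leftCoset_iff]
      have h1 : y * ((v k : QS) : G) ∈ N k := hv k hks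
      have h2 : (((v k)⁻¹ * x : QS) : G) ∈ N k := by
        have hcoe : (((v k)⁻¹ * x : QS) : G) = (y * ((v k : QS) : G))⁻¹ * (y * (x : G)) := by
          push_cast
          group
        rw [hcoe]
        exact mul_mem (inv_mem h1) hyk
      exact Subgroup.mem_subgroupOf.mpr h2
    -- Neumann's lemma: some H k has index at most s.card < p m
    obtain ⟨k, hks, hfin, hle⟩ := Subgroup.exists_index_le_card_of_leftCoset_cover hQcov
    -- the index is a power of p m
    have hdvd : (H k).index ∣ Nat.card QS := Subgroup.index_dvd_card (H k)
    obtain ⟨w, hw⟩ := IsPGroup.iff_card.mp Q.isPGroup'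
    rw [hw] at hdvd
    obtain ⟨e, _, hei⟩ := (Nat.dvd_prime_pow (hp m)).mp hdvd
    have he0 : e = 0 := by
      by_contra h0
      have h1 : p m ≤ (p m) ^ e := Nat.le_self_pow h0 _
      rw [← hei] at h1
      have h2 : s.card ≤ T.card := Finset.card_le_card (Finset.filter_subset _ _)
      omega
    have htop : H k = ⊤ := Subgroup.index_eq_one.mp (by rw [hei, he0, pow_zero])
    have hQle : QS ≤ N k := Subgroup.subgroupOf_eq_top.mp htop
    rcases eq_or_ne k m with rfl | hkm
    · -- Q is contained in the normalizer of P k = P m, hence Q = P m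
      have h2 : QS ⊓ Subgroup.normalizer ((P k : Subgroup G) : Set G) = QS ⊓ (P k : Subgroup G) :=
        IsPGroup.inf_normalizer_sylow Q.isPGroup' (P k)
      have h3 : QS ⊓ Subgroup.normalizer ((P k : Subgroup G) : Set G) = QS := inf_eq_left.mpr hQle
      have h4 : QS ≤ (P k : Subgroup G) := by
        rw [h3] at h2
        rw [h2]
        exact inf_le_right
      exact (Q.is_maximal' (P k).isPGroup' h4).symm
    · -- otherwise y ∈ N k, contradicting exclusivity
      exfalso
      have hkT : k ∈ T := Finset.mem_of_mem_filter _ hks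
      have h1 : y * ((v k : QS) : G) ∈ N k := hv k hks
      have h2 : ((v k : QS) : G) ∈ N k := hQle (SetLike.coe_mem (v k))
      have h3 : y ∈ N k := by
        have := mul_mem h1 (inv_mem h2)
        simpa [mul_assoc] using this
      exact hynot k hkT hkm h3
  -- hence P m is normal: contradiction
  have hnorm : Subgroup.normalizer ((P m : Subgroup G) : Set G) = ⊤ := by
    rw [Subgroup.eq_top_iff']
    intro g
    have h1 : ((g • P m : Sylow (p m) G) : Subgroup G) = (P m : Subgroup G) := key (g • P m)
    have h2 : g • P m = P m := Sylow.ext h1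
    exact Sylow.smul_eq_iff_mem_normalizer.mp h2
  exact hnn m (Subgroup.normalizer_eq_top_iff.mp hnorm)
end

section
/- Let G be a finite group such that for every prime p and every Sylow p-subgroup P of G, the index |P : O_p(G)| is at most p. Then for any choice of distinct primes p_1, …, p_n and Sylow p_i-subgroups P_i of G, there exists a single element x ∈ G such that P_i ∩ P_i^x = O_{p_i}(G) for all i = 1, …, n. -/
open Subgroup

/-- The `p`-core `O_p(G)`: the intersection of all Sylow `p`-subgroups of `G`. -/
def pCore (G : Type*) [Group G] (p : ℕ) : Subgroup G :=
  ⨅ P : Sylow p G, (P : Subgroup G)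

section Basic

variable {G : Type*} [Group G] {p : ℕ}

theorem pCore_le (P : Sylow p G) : pCore G p ≤ (P : Subgroup G) := iInf_le _ P

theorem mem_pCore {x : G} : x ∈ pCore G p ↔ ∀ P : Sylow p G, x ∈ (P : Subgroup G) :=
  Subgroup.mem_iInf

theorem isPGroup_pCore : IsPGroup p (pCore G p) :=
  (Classical.arbitrary (Sylow p G)).2.to_le (pCore_le _)

open scoped Pointwise in
instance pCore_normal : (pCore G p).Normal := by
  constructor
  intro n hn g
  rw [mem_pCore] at hn ⊢
  intro Q
  have h2 : n ∈ (((ConjAct.toConjAct g)⁻¹ • Q : Sylow p G) : Subgroup G) := hn _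
  rw [Sylow.pointwise_smul_def, Subgroup.mem_pointwise_smul_iff_inv_smul_mem] at h2
  rwa [inv_inv, ConjAct.toConjAct_smul] at h2

theorem le_pCore_of_normal {W : Subgroup G} (hW : IsPGroup p W) [W.Normal] :
    W ≤ pCore G p := by
  refine le_iInf fun Q => ?_
  have h := Q.3 (Q.2.to_sup_of_normal_right hW) le_sup_left
  rw [← h]
  exact le_sup_right

theorem pCore_eq_of_normal (P : Sylow p G) (h : (P : Subgroup G).Normal) :
    pCore G p = (P : Subgroup G) :=
  le_antisymm (pCore_le P) (@le_pCore_of_normal _ _ _ _ P.2 h)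

end Basic

section ConjSub

variable {G : Type*} [Group G]

theorem mem_conjSub {H : Subgroup G} {x y : G} : y ∈ conjSub H x ↔ x * y * x⁻¹ ∈ H := by
  simp only [conjSub, Subgroup.mem_map, MulEquiv.coe_toMonoidHom, MulAut.conj_apply]
  constructor
  · rintro ⟨h, hh, rfl⟩
    group
    simpa using hh
  · intro hy
    exact ⟨x * y * x⁻¹, hy, by group⟩

theorem conjSub_eq_self_of_normal {H : Subgroup G} (hH : H.Normal) (x : G) :
    conjSub H x = H := by
  ext y
  rw [mem_conjSub]
  constructor
  · intro h
    have h2 := hH.conj_mem _ h x⁻¹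
    have e : x⁻¹ * (x * y * x⁻¹) * x⁻¹⁻¹ = y := by group
    rwa [e] at h2
  · intro h
    exact hH.conj_mem _ h x

theorem card_conjSub (H : Subgroup G) (x : G) : Nat.card (conjSub H x) = Nat.card H :=
  Nat.card_congr (Subgroup.equivMapOfInjective H _ (MulAut.conj x⁻¹).injective).symm.toEquiv

theorem le_conjSub_of_le {H K : Subgroup G} (h : H ≤ K) (x : G) :
    conjSub H x ≤ conjSub K x := Subgroup.map_mono h

theorem mem_normalizer_of_conjSub_eq {H : Subgroup G} {x : G} (h : conjSub H x = H) :
    x ∈ (Subgroup.normalizer ((H : Subgroup G) : Set G)) := by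
  rw [Subgroup.mem_normalizer_iff]
  intro y
  nth_rewrite 1 [← h]
  rw [mem_conjSub]
end ConjSub

section Dichotomy

variable {G : Type*} [Group G] [Finite G] {p : ℕ} [Fact p.Prime]

theorem inter_conjSub_eq_pCore (P : Sylow p G)
    (hrel : (pCore G p).relIndex (P : Subgroup G) ≤ p)
    {x : G} (hx : x ∉ (Subgroup.normalizer ((P : Subgroup G) : Set G))) :
    (P : Subgroup G) ⊓ conjSub (P : Subgroup G) x = pCore G p := by
  set O := pCore G p with hO
  set M := (P : Subgroup G) ⊓ conjSub (P : Subgroup G) x with hM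
  have hOP : O ≤ (P : Subgroup G) := pCore_le P
  have hOM : O ≤ M := by
    refine le_inf hOP ?_
    have := le_conjSub_of_le hOP x
    rwa [conjSub_eq_self_of_normal pCore_normal x] at this
  have hMP : M ≤ (P : Subgroup G) := inf_le_left
  have hmul : O.relIndex M * M.relIndex (P : Subgroup G) = O.relIndex (P : Subgroup G) :=
    Subgroup.relIndex_mul_relIndex O M (P : Subgroup G) hOM hMP
  -- b ≠ 1
  have hb : M.relIndex (P : Subgroup G) ≠ 1 := by
    intro h1
    rw [Subgroup.relIndex_eq_one] at h1
    -- P ≤ M, hence P ≤ conjSub P x, hence equality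
    have hle : (P : Subgroup G) ≤ conjSub (P : Subgroup G) x := h1.trans inf_le_right
    have hcard : Nat.card (conjSub (P : Subgroup G) x) ≤ Nat.card (P : Subgroup G) :=
      le_of_eq (card_conjSub _ _)
    have heq := Subgroup.eq_of_le_of_card_ge hle hcard
    exact hx (mem_normalizer_of_conjSub_eq heq.symm)
  -- a is a power of p
  have hMp : IsPGroup p M := P.2.to_le hMP
  obtain ⟨k, hk⟩ := hMp.exists_card_eq
  have ha_dvd : O.relIndex M ∣ p ^ k := by
    rw [← hk, Subgroup.relIndex]
    exact Subgroup.index_dvd_card _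
  obtain ⟨j, hj, haj⟩ := (Nat.dvd_prime_pow (Fact.out : p.Prime)).mp ha_dvd
  have hbpos : M.relIndex (P : Subgroup G) ≠ 0 := by
    rw [Subgroup.relIndex]; exact Subgroup.index_ne_zero_of_finite
  have ha1 : O.relIndex M = 1 := by
    rcases Nat.eq_zero_or_pos j with hj0 | hjpos
    · rw [haj, hj0, pow_zero]
    · exfalso
      have hple : p ≤ O.relIndex M := by
        rw [haj]
        calc p = p ^ 1 := (pow_one p).symm
        _ ≤ p ^ j := Nat.pow_le_pow_right (Fact.out : p.Prime).pos hjpos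
      have hb2 : 2 ≤ M.relIndex (P : Subgroup G) := by omega
      have : p * 2 ≤ O.relIndex M * M.relIndex (P : Subgroup G) :=
        Nat.mul_le_mul hple hb2
      rw [hmul] at this
      have hp2 : 2 ≤ p := (Fact.out : p.Prime).two_le
      omega
  rw [Subgroup.relIndex_eq_one] at ha1
  exact le_antisymm ha1 hOM

end Dichotomy
section MulAutPCore

variable {H : Type*} [Group H] [Finite H] {q : ℕ} [Fact q.Prime]

theorem mulAut_mem_pCore (φ : MulAut H) {w : H} (hw : w ∈ pCore H q) :
    φ w ∈ pCore H q := by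
  rw [mem_pCore] at hw ⊢
  intro Q
  have hsurj : Function.Surjective ⇑(φ.symm.toMonoidHom) := φ.symm.surjective
  have h3 : w ∈ Subgroup.map φ.symm.toMonoidHom (Q : Subgroup H) := by
    have := hw (Sylow.mapSurjective hsurj Q)
    rwa [Sylow.coe_mapSurjective] at this
  obtain ⟨y, hy, hyw⟩ := h3
  have : φ w = y := by
    rw [← hyw]
    simp
  rwa [this]

end MulAutPCore

section LemS

universe u

theorem lemS : ∀ (N : ℕ) (G : Type u) (_ : Group G) (_ : Finite G),
    Nat.card G = N →
    (∀ q : ℕ, q.Prime → ∀ Q : Sylow q G, Nat.card (Q : Subgroup G) ≤ q) →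
    (∀ q : ℕ, q.Prime → pCore G q = ⊥) →
    Subsingleton G := by
  intro N
  induction N using Nat.strong_induction_on with
  | _ N IH =>
  intro G _ _ hN h1 h2
  by_contra hns
  rw [not_subsingleton_iff_nontrivial] at hns
  have hN2 : 2 ≤ N := by
    rw [← hN]
    exact Finite.one_lt_card_iff_nontrivial.mpr hns
  set p := N.minFac with hpdef
  have hp : p.Prime := Nat.minFac_prime (by omega)
  haveI : Fact p.Prime := ⟨hp⟩
  obtain ⟨P⟩ : Nonempty (Sylow p G) := inferInstance
  -- Sylow p-subgroup has card exactly p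
  have hPcard : Nat.card (P : Subgroup G) = p := by
    have hdvd : p ∣ N := Nat.minFac_dvd N
    have hfac : 0 < (Nat.card G).factorization p :=
      hp.factorization_pos_of_dvd (by omega) (hN ▸ hdvd)
    have hcm := Sylow.card_eq_multiplicity P
    have hle := h1 p hp P
    rw [hcm] at hle ⊢
    have hk1 : (Nat.card G).factorization p = 1 := by
      have h2le := hp.two_le
      have : p ^ (Nat.card G).factorization p ≤ p ^ 1 := by rwa [pow_one]
      have hle1 := (Nat.pow_le_pow_iff_right (by omega : 1 < p)).mp this
      omega
    rw [hk1, pow_one]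
  haveI : IsCyclic (P : Subgroup G) := isCyclic_of_prime_card hPcard
  -- normalizer ≤ centralizer
  have hNC : (Subgroup.normalizer ((P : Subgroup G) : Set G)) ≤ Subgroup.centralizer ((P : Subgroup G) : Set G) := by
    intro g hg
    set Nor := (Subgroup.normalizer ((P : Subgroup G) : Set G)) with hNor
    set H' := (P : Subgroup G).subgroupOf Nor with hH'
    haveI : H'.Normal := Subgroup.normal_in_normalizer
    have hcardH' : Nat.card H' = p := by
      rw [← hPcard]
      exact Nat.card_congr (Subgroup.subgroupOfEquivOfLe Subgroup.le_normalizer).toEquiv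
    haveI : IsCyclic H' := isCyclic_of_prime_card hcardH'
    set σ : MulAut H' := MulAut.conjNormal (⟨g, hg⟩ : Nor) with hσ
    have hσ1 : orderOf σ ∣ p - 1 := by
      have hdvd := orderOf_dvd_natCard σ
      rwa [IsCyclic.card_mulAut, hcardH', Nat.totient_prime hp] at hdvd
    have hσ2 : orderOf σ ∣ N := by
      have d1 : orderOf σ ∣ orderOf (⟨g, hg⟩ : Nor) := orderOf_map_dvd _ _
      have d2 : orderOf (⟨g, hg⟩ : Nor) ∣ Nat.card Nor := orderOf_dvd_natCard _
      have d3 : Nat.card Nor ∣ N := hN ▸ Subgroup.card_subgroup_dvd_card Nor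
      exact d1.trans (d2.trans d3)
    have hcop : Nat.gcd (p - 1) N = 1 := by
      by_contra hg1
      set d := Nat.gcd (p - 1) N with hd
      have hdpos : 0 < d := Nat.gcd_pos_of_pos_right _ (by omega)
      have hr : d.minFac.Prime := Nat.minFac_prime (by omega)
      have hr1 : d.minFac ∣ p - 1 := (Nat.minFac_dvd d).trans (Nat.gcd_dvd_left _ _)
      have hr2 : d.minFac ∣ N := (Nat.minFac_dvd d).trans (Nat.gcd_dvd_right _ _)
      have hge : p ≤ d.minFac := Nat.minFac_le_of_dvd hr.two_le hr2
      have hle' : d.minFac ≤ p - 1 := Nat.le_of_dvd (by have := hp.two_le; omega) hr1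
      have := hp.two_le
      omega
    have hσord : orderOf σ = 1 :=
      Nat.dvd_one.mp (hcop ▸ Nat.dvd_gcd hσ1 hσ2)
    have hσid : σ = 1 := orderOf_eq_one_iff.mp hσord
    rw [Subgroup.mem_centralizer_iff]
    intro m hm
    have hmP : m ∈ (P : Subgroup G) := hm
    have hmN : m ∈ Nor := Subgroup.le_normalizer hmP
    have hmH' : (⟨m, hmN⟩ : Nor) ∈ H' := by
      rw [hH', Subgroup.mem_subgroupOf]
      exact hmP
    have happ := MulAut.conjNormal_apply (H := H') (⟨g, hg⟩ : Nor) (⟨⟨m, hmN⟩, hmH'⟩ : H')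
    rw [← hσ, hσid] at happ
    -- happ : ↑((1 : MulAut H') _) = ⟨g,hg⟩ * ⟨m,hmN⟩ * ⟨g,hg⟩⁻¹
    simp only [MulAut.one_apply] at happ
    have hval : m = g * m * g⁻¹ := congrArg (fun z : Nor => (z : G)) happ
    calc m * g = (g * m * g⁻¹) * g := by rw [← hval]
    _ = g * m := by group
  -- Burnside's normal p-complement theorem
  have hcompl := MonoidHom.ker_transferSylow_isComplement' P hNC
  set K := (MonoidHom.transferSylow P hNC).ker with hK
  have hcardmul := hcompl.card_mul
  rw [hPcard, hN] at hcardmul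
  have hKpos : 1 ≤ Nat.card K := Nat.card_pos
  have hKlt : Nat.card K < N := by
    have h2' : Nat.card K * 2 ≤ Nat.card K * p := Nat.mul_le_mul_left _ hp.two_le
    omega
  -- hypotheses for K
  have h1' : ∀ r : ℕ, r.Prime → ∀ Q : Sylow r K, Nat.card (Q : Subgroup K) ≤ r := by
    intro r hr Q
    set Q' := (Q : Subgroup K).map K.subtype with hQ'
    have hQp : IsPGroup r Q' := Q.2.map _
    obtain ⟨R, hR⟩ := hQp.exists_le_sylow
    have hdvd : Nat.card Q' ∣ Nat.card (R : Subgroup G) := Subgroup.card_dvd_of_le hR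
    have hcardeq : Nat.card (Q : Subgroup K) = Nat.card Q' :=
      Nat.card_congr (Subgroup.equivMapOfInjective _ _ K.subtype_injective).toEquiv
    have hle : Nat.card Q' ≤ Nat.card (R : Subgroup G) := Nat.le_of_dvd Nat.card_pos hdvd
    rw [hcardeq]
    exact hle.trans (h1 r hr R)
  have h2' : ∀ r : ℕ, r.Prime → pCore K r = ⊥ := by
    intro r hr
    haveI : Fact r.Prime := ⟨hr⟩
    by_contra hW
    set W := pCore K r with hWdef
    set W' := W.map K.subtype with hW'def
    have hW'ne : W' ≠ ⊥ := by
      rw [hW'def, Ne, Subgroup.map_eq_bot_iff_of_injective _ K.subtype_injective]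
      exact hW
    have hWp : IsPGroup r W' := (isPGroup_pCore (G := K) (p := r)).map _
    have hWnormal : W'.Normal := by
      constructor
      intro w' hw' g
      obtain ⟨w, hw, rfl⟩ := hw'
      have hφw : MulAut.conjNormal g w ∈ W := mulAut_mem_pCore _ hw
      exact ⟨MulAut.conjNormal g w, hφw, MulAut.conjNormal_apply g w⟩
    have : W' ≤ pCore G r := @le_pCore_of_normal _ _ _ _ hWp hWnormal
    rw [h2 r hr, le_bot_iff] at this
    exact hW'ne this
  have hsub : Subsingleton K := IH (Nat.card K) hKlt K inferInstance inferInstance rfl h1' h2'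
  have hKbot : K = ⊥ := Subgroup.card_eq_one.mp (Nat.card_eq_one_iff_unique.mpr ⟨hsub, ⟨1⟩⟩)
  rw [hKbot, Subgroup.card_bot, one_mul] at hcardmul
  -- now G has order p, so P = ⊤ and pCore G p = ⊤ ≠ ⊥
  have hPtop : (P : Subgroup G) = ⊤ := Subgroup.eq_top_of_card_eq _ (by rw [hPcard, hN, hcardmul])
  have htopnormal : (P : Subgroup G).Normal := by
    rw [hPtop]
    infer_instance
  have hcore : pCore G p = (P : Subgroup G) := pCore_eq_of_normal P htopnormal
  rw [h2 p hp, hPtop] at hcore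
  obtain ⟨a, b, hab⟩ := hns
  have ha : a ∈ (⊥ : Subgroup G) := hcore ▸ Subgroup.mem_top a
  have hb : b ∈ (⊥ : Subgroup G) := hcore ▸ Subgroup.mem_top b
  rw [Subgroup.mem_bot] at ha hb
  exact hab (ha.trans hb.symm)

end LemS
section AuxMap

variable {G : Type*} [Group G] {G' : Type*} [Group G']

theorem mem_normalizer_map [Finite G'] (f : G →* G') {H : Subgroup G} {g : G}
    (hg : g ∈ (Subgroup.normalizer ((H : Subgroup G) : Set G))) : f g ∈ (Subgroup.normalizer ((H.map f : Subgroup G') : Set G')) := by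
  have hle : conjSub (H.map f) (f g) ≤ H.map f := by
    rintro y hy
    rw [mem_conjSub] at hy
    obtain ⟨h, hh, he⟩ := hy
    -- he : f h = f g * y * (f g)⁻¹
    have h2 : g⁻¹ * h * g ∈ H := by
      rw [Subgroup.mem_normalizer_iff] at hg
      exact (hg (g⁻¹ * h * g)).mpr (by
        have e : g * (g⁻¹ * h * g) * g⁻¹ = h := by group
        rwa [e])
    refine ⟨g⁻¹ * h * g, h2, ?_⟩
    rw [map_mul, map_mul, map_inv, he]
    group
  have hcard : Nat.card (H.map f) ≤ Nat.card (conjSub (H.map f) (f g)) :=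
    le_of_eq (card_conjSub _ _).symm
  exact mem_normalizer_of_conjSub_eq (Subgroup.eq_of_le_of_card_ge hle hcard)

end AuxMap
section LemM

universe u

theorem lemM : ∀ (N : ℕ) (G : Type u) (_ : Group G) (_ : Finite G),
    Nat.card G = N →
    (∀ p : ℕ, p.Prime → ∀ P : Sylow p G, (pCore G p).relIndex (P : Subgroup G) ≤ p) →
    ∀ (n : ℕ) (p : Fin n → ℕ), (∀ i, (p i).Prime) → Function.Injective p →
    ∀ (P : ∀ i, Sylow (p i) G),
    ∃ x : G, ∀ i, ¬ (P i : Subgroup G).Normal → x ∉ (Subgroup.normalizer ((P i : Subgroup G) : Set G)) := by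
  intro N
  induction N using Nat.strong_induction_on with
  | _ N IH =>
  intro G _ _ hN hsmall n p hp hinj P
  classical
  by_cases hcores : ∀ q : ℕ, q.Prime → pCore G q = ⊥
  · -- trivial group case
    have h1 : ∀ q, q.Prime → ∀ Q : Sylow q G, Nat.card (Q : Subgroup G) ≤ q := by
      intro q hq Q
      have := hsmall q hq Q
      rwa [hcores q hq, Subgroup.relIndex_bot_left] at this
    have hsub : Subsingleton G := lemS N G ‹_› ‹_› hN h1 hcores
    refine ⟨1, fun i hni => absurd ?_ hni⟩
    constructor
    intro a ha g
    have : g * a * g⁻¹ = a := Subsingleton.elim _ _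
    rwa [this]
  · push_neg at hcores
    obtain ⟨q, hq, hqcore⟩ := hcores
    haveI : Fact q.Prime := ⟨hq⟩
    set C := pCore G q with hCdef
    -- Z = C ∩ centralizer C is a nontrivial normal abelian subgroup
    set Z := C ⊓ Subgroup.centralizer (C : Set G) with hZdef
    have hZnormal : Z.Normal := by
      constructor
      intro a ha g
      rw [Subgroup.mem_inf] at ha
      obtain ⟨ha1, ha2⟩ := ha
      rw [Subgroup.mem_inf]
      refine ⟨pCore_normal.conj_mem a ha1 g, ?_⟩
      · rw [Subgroup.mem_centralizer_iff] at ha2 ⊢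
        intro h hh
        have hh' : g⁻¹ * h * g ∈ C := by
          have := pCore_normal.conj_mem h hh g⁻¹
          simpa using this
        have := ha2 _ hh'
        -- (g⁻¹ h g) a = a (g⁻¹ h g)  ⇒  h (g a g⁻¹) = (g a g⁻¹) h
        have e : h * (g * a * g⁻¹) = g * ((g⁻¹ * h * g) * a) * g⁻¹ := by group
        rw [e, this]
        group
    have hZne : Z ≠ ⊥ := by
      haveI : Nontrivial C := (Subgroup.nontrivial_iff_ne_bot C).mpr hqcore
      haveI := (isPGroup_pCore (G := G) (p := q)).center_nontrivial
      obtain ⟨z, hz⟩ := exists_ne (1 : Subgroup.center C)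
      intro hbot
      apply hz
      have hzZ : ((z : C) : G) ∈ Z := by
        rw [Subgroup.mem_inf]
        refine ⟨(z : C).2, ?_⟩
        · rw [Subgroup.mem_centralizer_iff]
          intro h hh
          have := z.2
          rw [Subgroup.mem_center_iff] at this
          have e := this ⟨h, hh⟩
          exact congrArg Subtype.val e
      rw [hbot, Subgroup.mem_bot] at hzZ
      ext
      exact hzZ
    -- choose V: minimal nontrivial normal subgroup contained in Z
    set T : Set ℕ := {k | ∃ W : Subgroup G, (W ≠ ⊥ ∧ W.Normal ∧ W ≤ Z) ∧ Nat.card W = k} with hTdef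
    have hTne : T.Nonempty := ⟨Nat.card Z, Z, ⟨hZne, hZnormal, le_rfl⟩, rfl⟩
    obtain ⟨V, ⟨hVne, hVnormal, hVZ⟩, hVcard⟩ := Nat.sInf_mem hTne
    haveI : V.Normal := hVnormal
    have hVmin : ∀ U : Subgroup G, U.Normal → U ≤ V → U ≠ ⊥ → U = V := by
      intro U hUn hUV hUne
      have hUT : Nat.card U ∈ T := ⟨U, ⟨hUne, hUn, hUV.trans hVZ⟩, rfl⟩
      have h1 : Nat.card V ≤ Nat.card U := hVcard ▸ Nat.sInf_le hUT
      exact Subgroup.eq_of_le_of_card_ge hUV h1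
    have hVabel : ∀ v ∈ V, ∀ w ∈ V, v * w = w * v := by
      intro v hv w hw
      have hvC : v ∈ C := (hVZ hv).1
      have hwc : w ∈ Subgroup.centralizer (C : Set G) := (hVZ hw).2
      rw [Subgroup.mem_centralizer_iff] at hwc
      exact hwc v hvC
    have hVcard2 : 2 ≤ Nat.card V := (Subgroup.one_lt_card_iff_ne_bot V).mpr hVne
    -- quotient setup
    set f := QuotientGroup.mk' V with hfdef
    have hfsurj : Function.Surjective f := QuotientGroup.mk'_surjective V
    have hcardq : Nat.card (G ⧸ V) < N := by
      have hmul := Subgroup.card_eq_card_quotient_mul_card_subgroup V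
      rw [hN] at hmul
      have hqpos : 1 ≤ Nat.card (G ⧸ V) := Nat.card_pos
      have h2' : Nat.card (G ⧸ V) * 2 ≤ Nat.card (G ⧸ V) * Nat.card V :=
        Nat.mul_le_mul_left _ hVcard2
      omega
    -- hsmall descends to the quotient
    have hsmallq : ∀ r : ℕ, r.Prime → ∀ Q' : Sylow r (G ⧸ V),
        (pCore (G ⧸ V) r).relIndex (Q' : Subgroup (G ⧸ V)) ≤ r := by
      intro r hr Q'
      haveI : Fact r.Prime := ⟨hr⟩
      obtain ⟨R, rfl⟩ := Sylow.mapSurjective_surjective hfsurj r Q'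
      rw [Sylow.coe_mapSurjective]
      have hOle : Subgroup.map f (pCore G r) ≤ pCore (G ⧸ V) r := by
        haveI : (Subgroup.map f (pCore G r)).Normal := pCore_normal.map f hfsurj
        exact le_pCore_of_normal ((isPGroup_pCore (G := G) (p := r)).map f)
      have h1 : (pCore (G ⧸ V) r).relIndex (Subgroup.map f (R : Subgroup G)) ∣
          (Subgroup.map f (pCore G r)).relIndex (Subgroup.map f (R : Subgroup G)) :=
        Subgroup.relIndex_dvd_of_le_left _ hOle
      have h2 : ((Subgroup.map f (pCore G r)).comap f).relIndex (R : Subgroup G) =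
          (Subgroup.map f (pCore G r)).relIndex (Subgroup.map f (R : Subgroup G)) :=
        Subgroup.relIndex_comap (Subgroup.map f (pCore G r)) f (R : Subgroup G)
      have h3 : (Subgroup.map f (pCore G r)).comap f = pCore G r ⊔ V := by
        rw [Subgroup.comap_map_eq, hfdef, QuotientGroup.ker_mk']
      have h4 : (pCore G r ⊔ V).relIndex (R : Subgroup G) ∣
          (pCore G r).relIndex (R : Subgroup G) :=
        Subgroup.relIndex_dvd_of_le_left _ le_sup_left
      have hchain : (pCore (G ⧸ V) r).relIndex (Subgroup.map f (R : Subgroup G)) ∣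
          (pCore G r).relIndex (R : Subgroup G) := by
        rw [← h2, h3] at h1
        exact h1.trans h4
      have hpos : (pCore G r).relIndex (R : Subgroup G) ≠ 0 := by
        rw [Subgroup.relIndex]
        exact Subgroup.index_ne_zero_of_finite
      exact (Nat.le_of_dvd (Nat.pos_of_ne_zero hpos) hchain).trans (hsmall r hr R)
    -- apply induction hypothesis to the quotient
    have instF : ∀ i, Fact (p i).Prime := fun i => ⟨hp i⟩
    set Q : ∀ i, Sylow (p i) (G ⧸ V) :=
      fun i => @Sylow.mapSurjective (p i) G _ _ (G ⧸ V) _ f hfsurj (instF i) (P i) with hQdef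
    obtain ⟨xq, hxq⟩ := IH (Nat.card (G ⧸ V)) hcardq (G ⧸ V) inferInstance inferInstance rfl
      hsmallq n p hp hinj Q
    obtain ⟨xt, hxt⟩ := hfsurj xq
    -- the bad index set B
    set B : Finset (Fin n) :=
      Finset.univ.filter
        (fun i => ¬(P i : Subgroup G).Normal ∧ ((Q i : Subgroup (G ⧸ V))).Normal) with hBdef
    -- key properties for i ∈ B
    have hkey : ∀ i ∈ B, (V ⊓ (Subgroup.normalizer ((P i : Subgroup G) : Set G)) = ⊥) ∧ (p i ∣ Nat.card V - 1) := by
      intro i hi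
      rw [hBdef, Finset.mem_filter] at hi
      obtain ⟨-, hnn, hqn⟩ := hi
      haveI : Fact (p i).Prime := instF i
      -- P i ⊔ V is normal in G
      have hMnormal : ((P i : Subgroup G) ⊔ V).Normal := by
        have h5 : ((Q i : Subgroup (G ⧸ V)).comap f).Normal := hqn.comap f
        have h6 : (Q i : Subgroup (G ⧸ V)) = Subgroup.map f (P i : Subgroup G) := by
          rw [hQdef]
          exact Sylow.coe_mapSurjective hfsurj (P i)
        rwa [h6, Subgroup.comap_map_eq, hfdef, QuotientGroup.ker_mk'] at h5
      -- p i ≠ q, so (P i) is a Sylow subgroup of P i ⊔ V in the right sense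
      have hpq : p i ≠ q := by
        intro he
        apply hnn
        have hVP : V ≤ (P i : Subgroup G) := by
          have : V ≤ pCore G (p i) := by rw [he]; exact hVZ.trans inf_le_left
          exact this.trans (pCore_le (P i))
        have : (P i : Subgroup G) ⊔ V = (P i : Subgroup G) := sup_of_le_left hVP
        rwa [this] at hMnormal
      -- Frattini argument
      haveI : ((P i : Subgroup G) ⊔ V).Normal := hMnormal
      have hfrat := Sylow.normalizer_sup_eq_top' (P i) (le_sup_left : (P i : Subgroup G) ≤ (P i : Subgroup G) ⊔ V)
      have hNV : (Subgroup.normalizer ((P i : Subgroup G) : Set G)) ⊔ V = ⊤ := by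
        rw [← Sylow.coe_coe] at hfrat
        rw [← hfrat, ← sup_assoc, sup_of_le_left Subgroup.le_normalizer]
      -- W := V ⊓ normalizer(P i) is normal in G
      set Wi := V ⊓ (Subgroup.normalizer ((P i : Subgroup G) : Set G)) with hWidef
      have hWiNormal : Wi.Normal := by
        rw [← Subgroup.normalizer_eq_top_iff, eq_top_iff, ← hNV]
        apply sup_le
        · intro m hm
          rw [Subgroup.mem_normalizer_iff]
          intro y
          constructor
          · rintro ⟨hy1, hy2⟩
            exact ⟨hVnormal.conj_mem y hy1 m, by
              have := Subgroup.mul_mem _ (Subgroup.mul_mem _ hm hy2) (Subgroup.inv_mem _ hm)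
              simpa [mul_assoc] using this⟩
          · rintro ⟨hy1, hy2⟩
            have e1 : y = m⁻¹ * (m * y * m⁻¹) * m := by group
            constructor
            · rw [e1]
              have := hVnormal.conj_mem _ hy1 m⁻¹
              simpa [mul_assoc] using this
            · rw [e1]
              have := Subgroup.mul_mem _ (Subgroup.mul_mem _ (Subgroup.inv_mem _ hm) hy2) hm
              simpa [mul_assoc] using this
        · intro v hv
          rw [Subgroup.mem_normalizer_iff]
          intro y
          constructor
          · rintro ⟨hy1, hy2⟩
            have e : v * y * v⁻¹ = y := by
              have := hVabel v hv y hy1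
              rw [this]
              group
            rw [e]
            exact ⟨hy1, hy2⟩
          · rintro ⟨hy1, hy2⟩
            have hyV : y ∈ V := by
              have e1 : y = v⁻¹ * (v * y * v⁻¹) * v := by group
              rw [e1]
              have := hVnormal.conj_mem _ hy1 v⁻¹
              simpa [mul_assoc] using this
            have e : v * y * v⁻¹ = y := by
              have := hVabel v hv y hyV
              rw [this]
              group
            rw [e] at hy2 hy1
            exact ⟨hyV, hy2⟩
      have hWine : Wi ≠ V := by
        intro he
        have hVle : V ≤ (Subgroup.normalizer ((P i : Subgroup G) : Set G)) := by
          rw [← he]; exact inf_le_right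
        apply hnn
        rw [← Subgroup.normalizer_eq_top_iff]
        rw [← hNV, sup_of_le_left hVle]
      have hWibot : Wi = ⊥ := by
        by_contra hne
        exact hWine (hVmin Wi hWiNormal inf_le_left hne)
      refine ⟨hWibot, ?_⟩
      -- index of normalizer = card V
      have hdisj : Disjoint ((Subgroup.normalizer ((P i : Subgroup G) : Set G))) V := by
        rw [disjoint_iff, inf_comm]
        exact hWibot
      have hcompl : ((Subgroup.normalizer ((P i : Subgroup G) : Set G))).IsComplement' V :=
        Subgroup.isComplement'_of_disjoint_and_mul_eq_univ hdisj (by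
          rw [← Subgroup.mul_normal, hNV, Subgroup.coe_top])
      have hindex : V.index = Nat.card ((Subgroup.normalizer ((P i : Subgroup G) : Set G))) := hcompl.index_eq_card
      have hcompl2 : V.IsComplement' ((Subgroup.normalizer ((P i : Subgroup G) : Set G))) := hcompl.symm
      have hindex2 : ((Subgroup.normalizer ((P i : Subgroup G) : Set G))).index = Nat.card V := hcompl2.index_eq_card
      have hmod : Nat.card (Sylow (p i) G) ≡ 1 [MOD p i] := card_sylow_modEq_one (p i) G
      rw [Sylow.card_eq_index_normalizer (P i), ← Sylow.coe_coe, hindex2] at hmod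
      exact (Nat.modEq_iff_dvd' (by omega : 1 ≤ Nat.card V)).mp hmod.symm
    -- counting: pick v ∈ V avoiding the bad cosets
    have hprod : 2 ^ B.card ≤ Nat.card V - 1 := by
      set s : Finset ℕ := B.image p with hsdef
      have hscard : s.card = B.card := Finset.card_image_of_injective B hinj
      have hdvd : ∏ r ∈ s, r ∣ Nat.card V - 1 := by
        apply Finset.prod_primes_dvd
        · intro r hr
          rw [hsdef, Finset.mem_image] at hr
          obtain ⟨i, _, rfl⟩ := hr
          exact (hp i).prime
        · intro r hr
          rw [hsdef, Finset.mem_image] at hr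
          obtain ⟨i, hiB, rfl⟩ := hr
          exact (hkey i hiB).2
      have hpow : 2 ^ s.card ≤ ∏ r ∈ s, r := by
        apply Finset.pow_card_le_prod
        intro r hr
        rw [hsdef, Finset.mem_image] at hr
        obtain ⟨i, _, rfl⟩ := hr
        exact (hp i).two_le
      have hle : ∏ r ∈ s, r ≤ Nat.card V - 1 := Nat.le_of_dvd (by omega) hdvd
      calc 2 ^ B.card = 2 ^ s.card := by rw [hscard]
      _ ≤ ∏ r ∈ s, r := hpow
      _ ≤ Nat.card V - 1 := hle
    have hBcard : B.card < Nat.card V := by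
      have := @Nat.lt_two_pow_self B.card
      omega
    haveI : Fintype G := Fintype.ofFinite G
    set VF : Finset G := Set.toFinset (V : Set G) with hVFdef
    have hVFcard : VF.card = Nat.card V := by
      rw [hVFdef, Set.toFinset_card, ← Nat.card_eq_fintype_card]
      rfl
    set Bad : Finset G :=
      B.biUnion (fun i => VF.filter (fun v => xt * v ∈ (Subgroup.normalizer ((P i : Subgroup G) : Set G)))) with hBaddef
    have hBadcard : Bad.card ≤ B.card := by
      rw [hBaddef]
      refine (Finset.card_biUnion_le).trans ?_
      have h1 : ∀ i ∈ B, (VF.filter (fun v => xt * v ∈ (Subgroup.normalizer ((P i : Subgroup G) : Set G)))).card ≤ 1 := by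
        intro i hi
        rw [Finset.card_le_one]
        intro a ha b hb
        rw [Finset.mem_filter, hVFdef, Set.mem_toFinset] at ha hb
        obtain ⟨haV, haN⟩ := ha
        obtain ⟨hbV, hbN⟩ := hb
        have h2 : a⁻¹ * b ∈ V ⊓ (Subgroup.normalizer ((P i : Subgroup G) : Set G)) := by
          constructor
          · exact Subgroup.mul_mem _ (Subgroup.inv_mem _ haV) hbV
          · have := Subgroup.mul_mem _ (Subgroup.inv_mem _ haN) hbN
            have e : (xt * a)⁻¹ * (xt * b) = a⁻¹ * b := by group
            rwa [e] at this
        rw [(hkey i hi).1, Subgroup.mem_bot] at h2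
        have : b = a * (a⁻¹ * b) := by group
        rw [this, h2, mul_one]
      calc ∑ i ∈ B, (VF.filter (fun v => xt * v ∈ (Subgroup.normalizer ((P i : Subgroup G) : Set G)))).card
          ≤ ∑ _i ∈ B, 1 := Finset.sum_le_sum h1
      _ = B.card := by rw [Finset.sum_const, smul_eq_mul, mul_one]
    have hsdne : (VF \ Bad).Nonempty := by
      rw [← Finset.card_pos]
      have := Finset.le_card_sdiff Bad VF
      omega
    obtain ⟨v, hv⟩ := hsdne
    rw [Finset.mem_sdiff] at hv
    obtain ⟨hvVF, hvBad⟩ := hv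
    have hvV : v ∈ V := by rwa [hVFdef, Set.mem_toFinset] at hvVF
    refine ⟨xt * v, fun i hni => ?_⟩
    by_cases hQn : ((Q i : Subgroup (G ⧸ V))).Normal
    · -- bad case: avoided by choice of v
      intro hmem
      apply hvBad
      rw [hBaddef, Finset.mem_biUnion]
      refine ⟨i, ?_, ?_⟩
      · rw [hBdef, Finset.mem_filter]
        exact ⟨Finset.mem_univ i, hni, hQn⟩
      · rw [Finset.mem_filter]
        exact ⟨hvVF, hmem⟩
    · -- good case: use the quotient solution
      have hx := hxq i hQn
      intro hmem
      apply hx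
      have hfv : f v = 1 := by
        have : v ∈ f.ker := by rw [hfdef, QuotientGroup.ker_mk']; exact hvV
        rwa [MonoidHom.mem_ker] at this
      have hfx : f (xt * v) = xq := by rw [map_mul, hxt, hfv, mul_one]
      have h6 : (Q i : Subgroup (G ⧸ V)) = Subgroup.map f (P i : Subgroup G) := by
        rw [hQdef]
        exact Sylow.coe_mapSurjective hfsurj (P i)
      rw [h6, ← hfx]
      exact mem_normalizer_map f hmem

end LemM
/-- **Corollary.** If `|P : O_p(G)| ≤ p` for every prime `p` and every Sylow `p`-subgroup `P`,
then for any Sylow subgroups `P_i` for distinct primes `p_i` there is a single `x ∈ G` with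
`P_i ∩ P_i^x = O_{p_i}(G)` for all `i`. -/
theorem exists_sync_of_small_sylow
    (G : Type*) [Group G] [Finite G]
    (hsmall : ∀ (p : ℕ), p.Prime → ∀ P : Sylow p G, (pCore G p).relIndex (P : Subgroup G) ≤ p)
    (n : ℕ) (p : Fin n → ℕ) (hp : ∀ i, (p i).Prime) (hinj : Function.Injective p)
    (P : ∀ i, Sylow (p i) G) :
    ∃ x : G, ∀ i, (P i : Subgroup G) ⊓ conjSub (P i : Subgroup G) x = pCore G (p i) := by
  obtain ⟨x, hx⟩ := lemM (Nat.card G) G ‹_› ‹_› rfl hsmall n p hp hinj P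
  refine ⟨x, fun i => ?_⟩
  haveI : Fact (p i).Prime := ⟨hp i⟩
  by_cases hn : (P i : Subgroup G).Normal
  · rw [conjSub_eq_self_of_normal hn, inf_idem, pCore_eq_of_normal (P i) hn]
  · exact inter_conjSub_eq_pCore (P i) (hsmall (p i) (hp i) (P i)) (hx i hn)
end

section
/- Let G be a finite group and let H(G) denote its hypercenter, i.e., the final (stabilizing) term of the upper central series of G. Then the Fitting subgroup of the quotient G/H(G) equals the image F(G)/H(G) of the Fitting subgroup of G. -/
/-- If the `n`-th lower central series term lies in the `k`-th upper central series term,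
then the lower central series reaches `⊥`. -/
theorem aux_lcs_le_ucs (G : Type*) [Group G] :
    ∀ k n : ℕ, Subgroup.lowerCentralSeries (⊤ : Subgroup G) n ≤ Subgroup.upperCentralSeries G k →
      Subgroup.lowerCentralSeries (⊤ : Subgroup G) (n + k) = ⊥ := by
  intro k
  induction k with
  | zero =>
    intro n h
    rw [Subgroup.upperCentralSeries_zero] at h
    rw [Nat.add_zero]
    exact le_bot_iff.mp h
  | succ k ih =>
    intro n h
    have h1 : Subgroup.lowerCentralSeries (⊤ : Subgroup G) (n + 1) ≤ Subgroup.upperCentralSeries G k := by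
      rw [Subgroup.lowerCentralSeries_succ, Subgroup.commutator_def, Subgroup.closure_le]
      rintro x ⟨p, hp, q, -, rfl⟩
      exact (Subgroup.mem_upperCentralSeries_succ_iff.mp (h hp)) q
    have := ih (n + 1) h1
    rwa [show n + 1 + k = n + (k + 1) by omega] at this

/-- Generalization of `isNilpotent_of_ker_le_center`: if the kernel lies in some term of the
upper central series and the codomain is nilpotent, then the domain is nilpotent. -/
theorem aux_isNilpotent_of_ker_le_ucs {G H : Type*} [Group G] [Group H] (f : G →* H) (k : ℕ)
    (hf1 : f.ker ≤ Subgroup.upperCentralSeries G k) (hH : Group.IsNilpotent H) :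
    Group.IsNilpotent G := by
  rw [Subgroup.nilpotent_iff_lowerCentralSeries] at *
  rcases hH with ⟨n, hn⟩
  refine ⟨n + k, aux_lcs_le_ucs G k n (le_trans (fun x hx => ?_) hf1)⟩
  have hfx : f x ∈ Subgroup.lowerCentralSeries (⊤ : Subgroup H) n :=
    Subgroup.lowerCentralSeries.map f n (Subgroup.mem_map_of_mem f hx)
  rw [hn, Subgroup.mem_bot] at hfx
  simpa [MonoidHom.mem_ker] using hfx

/-- Upper central series of an ambient group, intersected with a subgroup, lies in the
upper central series of the subgroup. -/
theorem aux_ucs_subgroup {G : Type*} [Group G] (H : Subgroup G) :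
    ∀ n : ℕ, ∀ x : H, (x : G) ∈ Subgroup.upperCentralSeries G n → x ∈ Subgroup.upperCentralSeries H n := by
  intro n
  induction n with
  | zero =>
    intro x hx
    rw [Subgroup.upperCentralSeries_zero, Subgroup.mem_bot] at hx
    rw [Subgroup.upperCentralSeries_zero, Subgroup.mem_bot]
    exact Subtype.ext hx
  | succ n ih =>
    intro x hx
    rw [Subgroup.mem_upperCentralSeries_succ_iff]
    intro y
    exact ih _ (Subgroup.mem_upperCentralSeries_succ_iff.mp hx (y : G))

/-- **Lemma.** Let `G` be a finite group and `H(G)` its hypercenter, i.e. the stabilizing term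
`upperCentralSeries G m` of the upper central series. Then the Fitting subgroup (the largest
nilpotent normal subgroup) of `G ⧸ H(G)` is the image of the Fitting subgroup of `G`. -/
theorem fitting_quotient_hypercenter
    (G : Type*) [Group G] [Finite G]
    (m : ℕ) (hstab : ∀ n, m ≤ n → Subgroup.upperCentralSeries G n = Subgroup.upperCentralSeries G m)
    (F : Subgroup G) (hF : F.Normal) (hFnilp : Group.IsNilpotent F)
    (hFmax : ∀ M : Subgroup G, M.Normal → Group.IsNilpotent M → M ≤ F)
    (F' : Subgroup (G ⧸ Subgroup.upperCentralSeries G m)) (hF' : F'.Normal)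
    (hF'nilp : Group.IsNilpotent F')
    (hF'max : ∀ M : Subgroup (G ⧸ Subgroup.upperCentralSeries G m),
      M.Normal → Group.IsNilpotent M → M ≤ F') :
    F' = F.map (QuotientGroup.mk' (Subgroup.upperCentralSeries G m)) := by
  set Z := Subgroup.upperCentralSeries G m with hZ
  set π := QuotientGroup.mk' Z with hπ
  have hπsurj : Function.Surjective π := QuotientGroup.mk_surjective
  -- the hypercenter is nilpotent (as a group), hence contained in F
  have hZnilp : Group.IsNilpotent Z := by
    refine ⟨m, ?_⟩
    rw [eq_top_iff]
    intro x _
    exact aux_ucs_subgroup Z m x x.2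
  have hZF : Z ≤ F := hFmax Z inferInstance hZnilp
  -- the image of F is normal and nilpotent
  have hmapnorm : (F.map π).Normal := Subgroup.Normal.map hF π hπsurj
  have hmapnilp : Group.IsNilpotent (F.map π) := by
    have : Group.IsNilpotent (F.map π) := by
      haveI := hFnilp
      exact nilpotent_of_surjective
        ((π.comp F.subtype).codRestrict (F.map π)
          (fun x => Subgroup.mem_map_of_mem π x.2))
        (by rintro ⟨_, x, hx, rfl⟩; exact ⟨⟨x, hx⟩, rfl⟩)
    exact this
  -- the preimage of F' is normal and nilpotent
  set K := F'.comap π with hK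
  have hKnorm : K.Normal := Subgroup.Normal.comap hF' π
  have hKnilp : Group.IsNilpotent K := by
    refine aux_isNilpotent_of_ker_le_ucs
      ((π.comp K.subtype).codRestrict F' (fun x => x.2)) m ?_ hF'nilp
    intro x hx
    have hx' : (x : G) ∈ Z := by
      have : π (x : G) = 1 := congrArg Subtype.val (hx : _)
      rwa [← MonoidHom.mem_ker, QuotientGroup.ker_mk'] at this
    exact aux_ucs_subgroup K m x hx'
  have hKF : K ≤ F := hFmax K hKnorm hKnilp
  -- conclude by antisymmetry
  apply le_antisymm
  · intro x hx
    obtain ⟨g, rfl⟩ := hπsurj x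
    exact Subgroup.mem_map_of_mem π (hKF (by simpa [hK] using hx))
  · exact hF'max _ hmapnorm hmapnilp
end
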